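/- For every θ ∈ ℓ̄₁(Λ), the function φ(t) = H_ε(θ^ε + t(θ − θ^ε)) is three times differentiable on (0,1) and satisfies the self-concordance inequality |φ'''(t)| ≤ (2/ε) ‖θ − θ^ε‖_{ℓ1} φ''(t) for all 0 < t < 1. -/

import Mathlib

open MeasureTheory Complex Filter Topology

set_option maxHeartbeats 1000000

noncomputable section

/-- Frequencies: `Λ = ℤ^d \ {0}`. -/
abbrev Lam (d : ℕ) := {v : Fin d → ℤ // v ≠ 0}

/-- Negation on `Λ`. -/
def negL {d : ℕ} (l : Lam d) : Lam d := ⟨-l.1, by simpa using l.2⟩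

/-- Fourier character `φ_λ(x) = exp(2πi⟨λ,x⟩)`. -/
def phiF {d : ℕ} (l : Lam d) (x : Fin d → ℝ) : ℂ :=
  Complex.exp (2 * (Real.pi : ℂ) * Complex.I * (∑ i, (l.1 i : ℂ) * (x i : ℂ)))

/-- The real Banach space `ℓ̄₁(Λ)` of complex summable sequences with
`θ_{-λ} = conj (θ_λ)`, as a real submodule of `ℓ¹(Λ; ℂ)`. -/
def SymmL1 (d : ℕ) : Submodule ℝ (lp (fun _ : Lam d => ℂ) 1) where
  carrier := {θ | ∀ l, θ (negL l) = starRingEnd ℂ (θ l)}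
  add_mem' := by
    intro a b ha hb l
    simp only [lp.coeFn_add, Pi.add_apply, map_add, ha l, hb l]
  zero_mem' := by
    intro l
    simp [lp.coeFn_zero]
  smul_mem' := by
    intro r a ha l
    simp only [lp.coeFn_smul, Pi.smul_apply, ha l, Complex.real_smul, map_mul,
      Complex.conj_ofReal]

instance (d : ℕ) : NormedAddCommGroup (SymmL1 d) := inferInstance

instance (d : ℕ) : NormedSpace ℝ (SymmL1 d) := inferInstance

/-- The `λ`-th coefficient of an element of `ℓ̄₁(Λ)`. -/
def coeffL {d : ℕ} (θ : SymmL1 d) (l : Lam d) : ℂ := (θ : lp (fun _ : Lam d => ℂ) 1) l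

/-- The unit cube `𝒳 = [0,1]^d`. -/
def cube (d : ℕ) : Set (Fin d → ℝ) := Set.Icc 0 1

/-- The uniform probability measure on the unit cube. -/
def muU (d : ℕ) : Measure (Fin d → ℝ) := volume.restrict (cube d)

/-- `u_θ(x) = Σ_λ θ_λ φ_λ(x)` (a real number thanks to the symmetry of `θ`). -/
def uFun {d : ℕ} (θ : SymmL1 d) (x : Fin d → ℝ) : ℝ :=
  (∑' l : Lam d, coeffL θ l * phiF l x).re

/-- `h_ε(θ, y)`. -/
def hEps {d : ℕ} (ε : ℝ) (c : (Fin d → ℝ) → (Fin d → ℝ) → ℝ)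
    (θ : SymmL1 d) (y : Fin d → ℝ) : ℝ :=
  ε * Real.log (∫ x, Real.exp ((uFun θ x - c x y) / ε) ∂muU d) + ε

/-- `H_ε(θ) = ∫ h_ε(θ, y) dν(y)`. -/
def HEps {d : ℕ} (ε : ℝ) (c : (Fin d → ℝ) → (Fin d → ℝ) → ℝ)
    (ν : Measure (Fin d → ℝ)) (θ : SymmL1 d) : ℝ :=
  ∫ y, hEps ε c θ y ∂ν

/-- The probability density `F_{θ,y}`. -/
def Fdens {d : ℕ} (ε : ℝ) (c : (Fin d → ℝ) → (Fin d → ℝ) → ℝ)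
    (θ : SymmL1 d) (y : Fin d → ℝ) (x : Fin d → ℝ) : ℝ :=
  Real.exp ((uFun θ x - c x y) / ε) /
    ∫ x', Real.exp ((uFun θ x' - c x' y) / ε) ∂muU d

/-- `g_λ(θ,y) = ∫ conj(φ_λ) F_{θ,y} dμ`, the `λ`-th partial derivative of `h_ε(·,y)`. -/
def gradC {d : ℕ} (ε : ℝ) (c : (Fin d → ℝ) → (Fin d → ℝ) → ℝ)
    (θ : SymmL1 d) (y : Fin d → ℝ) (l : Lam d) : ℂ :=
  ∫ x, starRingEnd ℂ (phiF l x) * (Fdens ε c θ y x : ℂ) ∂muU d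


/-! ### Auxiliary machinery -/

set_option linter.unusedSectionVars false

/-- A lower semicontinuous function on a compact set is bounded below. -/
lemma lsc_bddBelow {X : Type*} [TopologicalSpace X] {s : Set X} (hs : IsCompact s)
    {f : X → ℝ} (hf : LowerSemicontinuousOn f s) : ∃ M : ℝ, ∀ x ∈ s, M ≤ f x := by
  have hU : ∀ x ∈ s, {z | z ∈ s → f x - 1 < f z} ∈ 𝓝 x := by
    intro x hx
    have := hf x hx (f x - 1) (by linarith)
    rwa [eventually_nhdsWithin_iff] at this
  obtain ⟨t, hts, hcov⟩ := hs.elim_nhds_subcover (fun x => {z | z ∈ s → f x - 1 < f z}) hU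
  obtain ⟨M, hM⟩ := Finset.exists_le (α := ℝᵒᵈ) (t.image fun x => OrderDual.toDual (f x - 1))
  refine ⟨OrderDual.ofDual M, fun z hz => ?_⟩
  obtain ⟨x, hxt, hxz⟩ := Set.mem_iUnion₂.1 (hcov hz)
  have h1 : OrderDual.ofDual M ≤ f x - 1 := hM _ (Finset.mem_image_of_mem _ hxt)
  have h2 : f x - 1 < f z := hxz hz
  linarith

section AbstractLayer

variable {α : Type*} [MeasurableSpace α]

/-- moment integrals of the log-partition function -/
def gI (μ : Measure α) (a w : α → ℝ) (k : ℕ) (s : ℝ) : ℝ :=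
  ∫ x, w x ^ k * Real.exp (a x + s * w x) ∂μ

def DD1 (μ : Measure α) (a w : α → ℝ) (ε s : ℝ) : ℝ :=
  ε * (gI μ a w 1 s / gI μ a w 0 s)

def DD2 (μ : Measure α) (a w : α → ℝ) (ε s : ℝ) : ℝ :=
  ε * (gI μ a w 2 s / gI μ a w 0 s - (gI μ a w 1 s / gI μ a w 0 s) ^ 2)

def DD3 (μ : Measure α) (a w : α → ℝ) (ε s : ℝ) : ℝ :=
  ε * (gI μ a w 3 s / gI μ a w 0 s
      - 3 * (gI μ a w 1 s) * (gI μ a w 2 s) / (gI μ a w 0 s) ^ 2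
      + 2 * (gI μ a w 1 s / gI μ a w 0 s) ^ 3)

variable {μ : Measure α} [IsProbabilityMeasure μ] {a w : α → ℝ} {β : ℝ}

lemma gI_integrand_meas (ha : AEStronglyMeasurable a μ) (hw : AEStronglyMeasurable w μ)
    (k : ℕ) (s : ℝ) :
    AEStronglyMeasurable (fun x => w x ^ k * Real.exp (a x + s * w x)) μ :=
  (hw.pow k).mul (Real.continuous_exp.comp_aestronglyMeasurable (ha.add (hw.const_mul s)))

lemma gI_integrable (ha : AEStronglyMeasurable a μ)
    (hEa : Integrable (fun x => Real.exp (a x)) μ)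
    (hw : AEStronglyMeasurable w μ) (hwb : ∀ᵐ x ∂μ, |w x| ≤ β) (k : ℕ) (s : ℝ) :
    Integrable (fun x => w x ^ k * Real.exp (a x + s * w x)) μ := by
  refine Integrable.mono' ((hEa.const_mul (β ^ k * Real.exp (|s| * β))))
    (gI_integrand_meas ha hw k s) ?_
  filter_upwards [hwb] with x hx
  have hβ : 0 ≤ β := (abs_nonneg _).trans hx
  have h1 : |w x ^ k| ≤ β ^ k := by
    rw [_root_.abs_pow]; exact pow_le_pow_left₀ (abs_nonneg _) hx k
  have h2 : Real.exp (a x + s * w x) ≤ Real.exp (|s| * β) * Real.exp (a x) := by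
    rw [← Real.exp_add]
    apply Real.exp_le_exp.2
    have : s * w x ≤ |s| * β := by
      calc s * w x ≤ |s * w x| := le_abs_self _
      _ = |s| * |w x| := abs_mul _ _
      _ ≤ |s| * β := by exact mul_le_mul_of_nonneg_left hx (abs_nonneg _)
    linarith
  calc ‖w x ^ k * Real.exp (a x + s * w x)‖ = |w x ^ k| * Real.exp (a x + s * w x) := by
        rw [norm_mul, Real.norm_eq_abs, Real.norm_eq_abs, abs_of_pos (Real.exp_pos _)]
    _ ≤ β ^ k * (Real.exp (|s| * β) * Real.exp (a x)) := by
        apply mul_le_mul h1 h2 (Real.exp_pos _).le (by positivity)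
    _ = β ^ k * Real.exp (|s| * β) * Real.exp (a x) := by ring

lemma gI_zero_pos (ha : AEStronglyMeasurable a μ)
    (hEa : Integrable (fun x => Real.exp (a x)) μ)
    (hw : AEStronglyMeasurable w μ) (hwb : ∀ᵐ x ∂μ, |w x| ≤ β) (s : ℝ) :
    0 < gI μ a w 0 s := by
  have hint := gI_integrable ha hEa hw hwb 0 s
  simp only [pow_zero, one_mul] at hint ⊢
  have : NeZero μ := ⟨IsProbabilityMeasure.ne_zero μ⟩
  have := integral_exp_pos (f := fun x => a x + s * w x) hint
  simpa [gI]

lemma gI_abs_le (ha : AEStronglyMeasurable a μ)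
    (hEa : Integrable (fun x => Real.exp (a x)) μ)
    (hw : AEStronglyMeasurable w μ) (hwb : ∀ᵐ x ∂μ, |w x| ≤ β) (k : ℕ) (s : ℝ) :
    |gI μ a w k s| ≤ β ^ k * gI μ a w 0 s := by
  have h0 := gI_integrable ha hEa hw hwb 0 s
  simp only [pow_zero, one_mul] at h0
  rw [← Real.norm_eq_abs]
  calc ‖gI μ a w k s‖ ≤ ∫ x, ‖w x ^ k * Real.exp (a x + s * w x)‖ ∂μ :=
        norm_integral_le_integral_norm _
    _ ≤ ∫ x, β ^ k * Real.exp (a x + s * w x) ∂μ := by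
        apply integral_mono_ae ((gI_integrable ha hEa hw hwb k s).norm) (h0.const_mul _)
        filter_upwards [hwb] with x hx
        have h1 : |w x ^ k| ≤ β ^ k := by
          rw [_root_.abs_pow]; exact pow_le_pow_left₀ (abs_nonneg _) hx k
        calc ‖w x ^ k * Real.exp (a x + s * w x)‖ = |w x ^ k| * Real.exp (a x + s * w x) := by
              rw [norm_mul, Real.norm_eq_abs, Real.norm_eq_abs, abs_of_pos (Real.exp_pos _)]
          _ ≤ β ^ k * Real.exp (a x + s * w x) :=
              mul_le_mul_of_nonneg_right h1 (Real.exp_pos _).le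
    _ = β ^ k * gI μ a w 0 s := by
        rw [integral_const_mul]; simp [gI]

lemma gI_hasDerivAt (ha : AEStronglyMeasurable a μ)
    (hEa : Integrable (fun x => Real.exp (a x)) μ)
    (hw : AEStronglyMeasurable w μ) (hwb : ∀ᵐ x ∂μ, |w x| ≤ β) (k : ℕ) (s : ℝ) :
    HasDerivAt (gI μ a w k) (gI μ a w (k+1) s) s := by
  have hβ : 0 ≤ β := by
    rcases hwb.exists with ⟨x, hx⟩; exact (abs_nonneg _).trans hx
  have key := hasDerivAt_integral_of_dominated_loc_of_deriv_le (μ := μ)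
    (F := fun t x => w x ^ k * Real.exp (a x + t * w x))
    (F' := fun t x => w x ^ (k+1) * Real.exp (a x + t * w x))
    (x₀ := s) (bound := fun x => β ^ (k+1) * Real.exp ((|s|+1) * β) * Real.exp (a x))
    (Metric.ball_mem_nhds _ one_pos)
    (Eventually.of_forall fun t => gI_integrand_meas ha hw k t)
    (gI_integrable ha hEa hw hwb k s)
    (gI_integrand_meas ha hw (k+1) s)
    ?_ ((hEa.const_mul _)) ?_
  · exact key.2
  · filter_upwards [hwb] with x hx t ht
    have h1 : |w x ^ (k+1)| ≤ β ^ (k+1) := by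
      rw [_root_.abs_pow]; exact pow_le_pow_left₀ (abs_nonneg _) hx _
    have hts : |t| ≤ |s| + 1 := by
      rw [Metric.mem_ball, Real.dist_eq] at ht
      calc |t| = |s + (t - s)| := by ring_nf
        _ ≤ |s| + |t - s| := abs_add_le _ _
        _ ≤ |s| + 1 := by linarith [le_of_lt ht]
    have h2 : Real.exp (a x + t * w x) ≤ Real.exp ((|s|+1) * β) * Real.exp (a x) := by
      rw [← Real.exp_add]
      apply Real.exp_le_exp.2
      have : t * w x ≤ (|s|+1) * β := by
        calc t * w x ≤ |t * w x| := le_abs_self _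
          _ = |t| * |w x| := abs_mul _ _
          _ ≤ (|s|+1) * β := mul_le_mul hts hx (abs_nonneg _) (by positivity)
      linarith
    calc ‖w x ^ (k+1) * Real.exp (a x + t * w x)‖
        = |w x ^ (k+1)| * Real.exp (a x + t * w x) := by
          rw [norm_mul, Real.norm_eq_abs, Real.norm_eq_abs, abs_of_pos (Real.exp_pos _)]
      _ ≤ β ^ (k+1) * (Real.exp ((|s|+1) * β) * Real.exp (a x)) :=
          mul_le_mul h1 h2 (Real.exp_pos _).le (by positivity)
      _ = β ^ (k+1) * Real.exp ((|s|+1) * β) * Real.exp (a x) := by ring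
  · filter_upwards with x t _
    have : HasDerivAt (fun t : ℝ => a x + t * w x) (w x) t := by
      simpa using ((hasDerivAt_mul_const (w x) (x := t)).const_add (a x))
    have := ((this.exp).const_mul (w x ^ k))
    refine this.congr_deriv ?_
    ring

lemma beta_nonneg' (hwb : ∀ᵐ x ∂μ, |w x| ≤ β) : 0 ≤ β := by
  rcases hwb.exists with ⟨x, hx⟩; exact (abs_nonneg _).trans hx

section derivs
variable (ha : AEStronglyMeasurable a μ) (hEa : Integrable (fun x => Real.exp (a x)) μ)
  (hw : AEStronglyMeasurable w μ) (hwb : ∀ᵐ x ∂μ, |w x| ≤ β) (ε : ℝ)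

include ha hEa hw hwb

lemma hasDerivAt_psi (s : ℝ) :
    HasDerivAt (fun s => ε * Real.log (gI μ a w 0 s) + ε) (DD1 μ a w ε s) s := by
  have h0 := gI_zero_pos ha hEa hw hwb s
  exact (((gI_hasDerivAt ha hEa hw hwb 0 s).log h0.ne').const_mul ε).add_const ε

lemma hasDerivAt_DD1 (s : ℝ) :
    HasDerivAt (DD1 μ a w ε) (DD2 μ a w ε s) s := by
  have h0 := gI_zero_pos ha hEa hw hwb s
  have := (((gI_hasDerivAt ha hEa hw hwb 1 s).div (gI_hasDerivAt ha hEa hw hwb 0 s)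
    h0.ne').const_mul ε)
  refine this.congr_deriv ?_
  unfold DD2
  field_simp

lemma hasDerivAt_DD2 (s : ℝ) :
    HasDerivAt (DD2 μ a w ε) (DD3 μ a w ε s) s := by
  have h0 := gI_zero_pos ha hEa hw hwb s
  have h1 := (gI_hasDerivAt ha hEa hw hwb 1 s).div (gI_hasDerivAt ha hEa hw hwb 0 s) h0.ne'
  have h2 := (gI_hasDerivAt ha hEa hw hwb 2 s).div (gI_hasDerivAt ha hEa hw hwb 0 s) h0.ne'
  have := ((h2.sub (h1.pow 2)).const_mul ε)
  refine this.congr_deriv ?_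
  unfold DD3
  simp only [Pi.div_apply]
  field_simp
  ring_nf
  field_simp
  ring

lemma abs_quot_le (k : ℕ) (s : ℝ) : |gI μ a w k s / gI μ a w 0 s| ≤ β ^ k := by
  have h0 := gI_zero_pos ha hEa hw hwb s
  rw [abs_div, _root_.abs_of_pos h0, div_le_iff₀ h0]
  exact gI_abs_le ha hEa hw hwb k s

lemma abs_DD1_le (hε : 0 ≤ ε) (s : ℝ) : |DD1 μ a w ε s| ≤ ε * β := by
  unfold DD1
  rw [abs_mul, _root_.abs_of_nonneg hε]
  refine mul_le_mul_of_nonneg_left ?_ hε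
  simpa using abs_quot_le ha hEa hw hwb 1 s

lemma abs_DD2_le (hε : 0 ≤ ε) (s : ℝ) : |DD2 μ a w ε s| ≤ 2 * (ε * β ^ 2) := by
  unfold DD2
  have hb := beta_nonneg' (μ := μ) (w := w) hwb
  rw [abs_mul, _root_.abs_of_nonneg hε]
  have q2 := abs_quot_le ha hEa hw hwb 2 s
  have q1 := abs_quot_le ha hEa hw hwb 1 s
  have : |gI μ a w 2 s / gI μ a w 0 s - (gI μ a w 1 s / gI μ a w 0 s) ^ 2| ≤ 2 * β ^ 2 := by
    have h1 : |(gI μ a w 1 s / gI μ a w 0 s) ^ 2| ≤ β ^ 2 := by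
      rw [_root_.abs_pow]
      exact pow_le_pow_left₀ (abs_nonneg _) (by simpa using q1) 2
    calc _ ≤ |gI μ a w 2 s / gI μ a w 0 s| + |(gI μ a w 1 s / gI μ a w 0 s) ^ 2| :=
          abs_sub _ _
      _ ≤ β ^ 2 + β ^ 2 := add_le_add q2 h1
      _ = 2 * β ^ 2 := by ring
  calc ε * |_| ≤ ε * (2 * β ^ 2) := mul_le_mul_of_nonneg_left this hε
    _ = 2 * (ε * β ^ 2) := by ring

lemma abs_DD3_le (hε : 0 ≤ ε) (s : ℝ) : |DD3 μ a w ε s| ≤ 6 * (ε * β ^ 3) := by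
  unfold DD3
  have hb := beta_nonneg' (μ := μ) (w := w) hwb
  rw [abs_mul, _root_.abs_of_nonneg hε]
  have q3 := abs_quot_le ha hEa hw hwb 3 s
  have q2 := abs_quot_le ha hEa hw hwb 2 s
  have q1 := abs_quot_le ha hEa hw hwb 1 s
  have e2 : 3 * (gI μ a w 1 s) * (gI μ a w 2 s) / (gI μ a w 0 s) ^ 2
      = 3 * ((gI μ a w 1 s / gI μ a w 0 s) * (gI μ a w 2 s / gI μ a w 0 s)) := by
    field_simp
  have h2 : |3 * (gI μ a w 1 s) * (gI μ a w 2 s) / (gI μ a w 0 s) ^ 2| ≤ 3 * β ^ 3 := by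
    rw [e2, abs_mul, abs_mul]
    have : |(3:ℝ)| = 3 := by norm_num
    rw [this]
    have := mul_le_mul q1 q2 (abs_nonneg _) (by positivity)
    calc 3 * (|gI μ a w 1 s / gI μ a w 0 s| * |gI μ a w 2 s / gI μ a w 0 s|)
        ≤ 3 * (β ^ 1 * β ^ 2) := by
          exact mul_le_mul_of_nonneg_left this (by norm_num)
      _ = 3 * β ^ 3 := by ring
  have h3 : |2 * (gI μ a w 1 s / gI μ a w 0 s) ^ 3| ≤ 2 * β ^ 3 := by
    rw [abs_mul, _root_.abs_pow]
    have : |(2:ℝ)| = 2 := by norm_num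
    rw [this]
    refine mul_le_mul_of_nonneg_left ?_ (by norm_num)
    exact pow_le_pow_left₀ (abs_nonneg _) (by simpa using q1) 3
  have : |gI μ a w 3 s / gI μ a w 0 s
      - 3 * (gI μ a w 1 s) * (gI μ a w 2 s) / (gI μ a w 0 s) ^ 2
      + 2 * (gI μ a w 1 s / gI μ a w 0 s) ^ 3| ≤ β ^ 3 + 3 * β ^ 3 + 2 * β ^ 3 := by
    calc _ ≤ |gI μ a w 3 s / gI μ a w 0 s
        - 3 * (gI μ a w 1 s) * (gI μ a w 2 s) / (gI μ a w 0 s) ^ 2|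
        + |2 * (gI μ a w 1 s / gI μ a w 0 s) ^ 3| := abs_add_le _ _
      _ ≤ (|gI μ a w 3 s / gI μ a w 0 s|
        + |3 * (gI μ a w 1 s) * (gI μ a w 2 s) / (gI μ a w 0 s) ^ 2|)
        + |2 * (gI μ a w 1 s / gI μ a w 0 s) ^ 3| := by
          exact add_le_add_left (abs_sub _ _) _
      _ ≤ β ^ 3 + 3 * β ^ 3 + 2 * β ^ 3 := by
          exact add_le_add (add_le_add q3 h2) h3
  calc ε * |_| ≤ ε * (β ^ 3 + 3 * β ^ 3 + 2 * β ^ 3) := mul_le_mul_of_nonneg_left this hε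
    _ = 6 * (ε * β ^ 3) := by ring

lemma central_integrable (m : ℝ) (k : ℕ) (s : ℝ) :
    Integrable (fun x => (w x - m) ^ k * Real.exp (a x + s * w x)) μ := by
  have h0 := gI_integrable ha hEa hw hwb 0 s
  simp only [pow_zero, one_mul] at h0
  refine Integrable.mono' (h0.const_mul ((β + |m|) ^ k))
    (((hw.sub aestronglyMeasurable_const).pow k).mul
      (Real.continuous_exp.comp_aestronglyMeasurable (ha.add (hw.const_mul s)))) ?_
  filter_upwards [hwb] with x hx
  rw [norm_mul, Real.norm_eq_abs, Real.norm_eq_abs, _root_.abs_of_pos (Real.exp_pos _),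
    _root_.abs_pow]
  refine mul_le_mul_of_nonneg_right (pow_le_pow_left₀ (abs_nonneg _) ?_ k) (Real.exp_pos _).le
  calc |w x - m| ≤ |w x| + |m| := abs_sub _ _
    _ ≤ β + |m| := add_le_add_left hx _

lemma central2_eq (m : ℝ) (s : ℝ) :
    ∫ x, (w x - m) ^ 2 * Real.exp (a x + s * w x) ∂μ
      = gI μ a w 2 s - 2 * m * gI μ a w 1 s + m ^ 2 * gI μ a w 0 s := by
  have e : (fun x => (w x - m) ^ 2 * Real.exp (a x + s * w x))
      = fun x => (w x ^ 2 * Real.exp (a x + s * w x)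
          - (2 * m) * (w x ^ 1 * Real.exp (a x + s * w x)))
          + m ^ 2 * (w x ^ 0 * Real.exp (a x + s * w x)) := by
    funext x; ring
  have i2 := gI_integrable ha hEa hw hwb 2 s
  have i1 : Integrable (fun x => 2 * m * (w x ^ 1 * Real.exp (a x + s * w x))) μ :=
    (gI_integrable ha hEa hw hwb 1 s).const_mul _
  have i0 : Integrable (fun x => m ^ 2 * (w x ^ 0 * Real.exp (a x + s * w x))) μ :=
    (gI_integrable ha hEa hw hwb 0 s).const_mul _
  have i21 : Integrable (fun x => w x ^ 2 * Real.exp (a x + s * w x)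
      - 2 * m * (w x ^ 1 * Real.exp (a x + s * w x))) μ := i2.sub i1
  rw [e, integral_add i21 i0, integral_sub i2 i1, integral_const_mul, integral_const_mul]
  simp only [gI]

lemma central3_eq (m : ℝ) (s : ℝ) :
    ∫ x, (w x - m) ^ 3 * Real.exp (a x + s * w x) ∂μ
      = gI μ a w 3 s - 3 * m * gI μ a w 2 s + 3 * m ^ 2 * gI μ a w 1 s
        - m ^ 3 * gI μ a w 0 s := by
  have e : (fun x => (w x - m) ^ 3 * Real.exp (a x + s * w x))
      = fun x => ((w x ^ 3 * Real.exp (a x + s * w x)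
          - (3 * m) * (w x ^ 2 * Real.exp (a x + s * w x)))
          + (3 * m ^ 2) * (w x ^ 1 * Real.exp (a x + s * w x)))
          - m ^ 3 * (w x ^ 0 * Real.exp (a x + s * w x)) := by
    funext x; ring
  have i3 := gI_integrable ha hEa hw hwb 3 s
  have i2 : Integrable (fun x => 3 * m * (w x ^ 2 * Real.exp (a x + s * w x))) μ :=
    (gI_integrable ha hEa hw hwb 2 s).const_mul _
  have i1 : Integrable (fun x => 3 * m ^ 2 * (w x ^ 1 * Real.exp (a x + s * w x))) μ :=
    (gI_integrable ha hEa hw hwb 1 s).const_mul _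
  have i0 : Integrable (fun x => m ^ 3 * (w x ^ 0 * Real.exp (a x + s * w x))) μ :=
    (gI_integrable ha hEa hw hwb 0 s).const_mul _
  have i32 : Integrable (fun x => w x ^ 3 * Real.exp (a x + s * w x)
      - 3 * m * (w x ^ 2 * Real.exp (a x + s * w x))) μ := i3.sub i2
  have i321 : Integrable (fun x => (w x ^ 3 * Real.exp (a x + s * w x)
      - 3 * m * (w x ^ 2 * Real.exp (a x + s * w x)))
      + 3 * m ^ 2 * (w x ^ 1 * Real.exp (a x + s * w x))) μ := i32.add i1
  rw [e, integral_sub i321 i0, integral_add i32 i1, integral_sub i3 i2,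
    integral_const_mul, integral_const_mul, integral_const_mul]
  simp only [gI]

lemma DD2_nonneg {ε : ℝ} (hε : 0 ≤ ε) (s : ℝ) : 0 ≤ DD2 μ a w ε s := by
  have h0 := gI_zero_pos ha hEa hw hwb s
  set m := gI μ a w 1 s / gI μ a w 0 s with hm
  have hC2 : 0 ≤ ∫ x, (w x - m) ^ 2 * Real.exp (a x + s * w x) ∂μ := by
    apply integral_nonneg
    intro x; positivity
  rw [central2_eq ha hEa hw hwb m s] at hC2
  have key : gI μ a w 2 s / gI μ a w 0 s - m ^ 2
      = (gI μ a w 2 s - 2 * m * gI μ a w 1 s + m ^ 2 * gI μ a w 0 s) / gI μ a w 0 s := by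
    rw [hm]; field_simp; ring
  unfold DD2
  rw [← hm, key]
  positivity

lemma abs_DD3_le_mul {ε : ℝ} (hε : 0 ≤ ε) (s : ℝ) :
    |DD3 μ a w ε s| ≤ 2 * β * DD2 μ a w ε s := by
  have h0 := gI_zero_pos ha hEa hw hwb s
  have hb : 0 ≤ β := by
    rcases hwb.exists with ⟨x, hx⟩; exact (abs_nonneg _).trans hx
  set m := gI μ a w 1 s / gI μ a w 0 s with hm
  have hmb : |m| ≤ β := by
    rw [hm, abs_div, _root_.abs_of_pos h0, div_le_iff₀ h0]
    simpa using gI_abs_le ha hEa hw hwb 1 s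
  have hC3 : |∫ x, (w x - m) ^ 3 * Real.exp (a x + s * w x) ∂μ|
      ≤ 2 * β * ∫ x, (w x - m) ^ 2 * Real.exp (a x + s * w x) ∂μ := by
    rw [← Real.norm_eq_abs]
    calc ‖∫ x, (w x - m) ^ 3 * Real.exp (a x + s * w x) ∂μ‖
        ≤ ∫ x, ‖(w x - m) ^ 3 * Real.exp (a x + s * w x)‖ ∂μ :=
          norm_integral_le_integral_norm _
      _ ≤ ∫ x, 2 * β * ((w x - m) ^ 2 * Real.exp (a x + s * w x)) ∂μ := by
          apply integral_mono_ae ((central_integrable ha hEa hw hwb m 3 s).norm)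
            ((central_integrable ha hEa hw hwb m 2 s).const_mul _)
          filter_upwards [hwb] with x hx
          rw [norm_mul, Real.norm_eq_abs, Real.norm_eq_abs,
            _root_.abs_of_pos (Real.exp_pos _), _root_.abs_pow]
          have h1 : |w x - m| ≤ 2 * β := by
            calc |w x - m| ≤ |w x| + |m| := abs_sub _ _
              _ ≤ β + β := add_le_add hx hmb
              _ = 2 * β := by ring
          calc |w x - m| ^ 3 * Real.exp (a x + s * w x)
              = |w x - m| * (|w x - m| ^ 2 * Real.exp (a x + s * w x)) := by ring
            _ ≤ 2 * β * (|w x - m| ^ 2 * Real.exp (a x + s * w x)) := by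
                refine mul_le_mul_of_nonneg_right h1 (by positivity)
            _ = 2 * β * ((w x - m) ^ 2 * Real.exp (a x + s * w x)) := by
                rw [_root_.sq_abs]
      _ = 2 * β * ∫ x, (w x - m) ^ 2 * Real.exp (a x + s * w x) ∂μ := integral_const_mul _ _
  rw [central2_eq ha hEa hw hwb m s, central3_eq ha hEa hw hwb m s] at hC3
  have keyD3 : DD3 μ a w ε s = ε * ((gI μ a w 3 s - 3 * m * gI μ a w 2 s
      + 3 * m ^ 2 * gI μ a w 1 s - m ^ 3 * gI μ a w 0 s) / gI μ a w 0 s) := by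
    unfold DD3; rw [← hm, hm]
    congr 1
    field_simp
    ring
  have keyD2 : DD2 μ a w ε s = ε * ((gI μ a w 2 s - 2 * m * gI μ a w 1 s
      + m ^ 2 * gI μ a w 0 s) / gI μ a w 0 s) := by
    unfold DD2; rw [← hm, hm]
    congr 1
    field_simp
    ring
  rw [keyD3, keyD2, abs_mul, _root_.abs_of_nonneg hε, abs_div, _root_.abs_of_pos h0]
  calc ε * (|gI μ a w 3 s - 3 * m * gI μ a w 2 s + 3 * m ^ 2 * gI μ a w 1 s
        - m ^ 3 * gI μ a w 0 s| / gI μ a w 0 s)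
      ≤ ε * ((2 * β * (gI μ a w 2 s - 2 * m * gI μ a w 1 s + m ^ 2 * gI μ a w 0 s))
          / gI μ a w 0 s) := by
        refine mul_le_mul_of_nonneg_left ?_ hε
        exact div_le_div_of_nonneg_right hC3 h0.le
    _ = 2 * β * (ε * ((gI μ a w 2 s - 2 * m * gI μ a w 1 s + m ^ 2 * gI μ a w 0 s)
          / gI μ a w 0 s)) := by ring

end derivs
end AbstractLayer

/-! ### Fourier side lemmas -/

lemma phiF_norm {d : ℕ} (l : Lam d) (x : Fin d → ℝ) : ‖phiF l x‖ = 1 := by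
  unfold phiF
  rw [Complex.norm_exp]
  have : (∑ i, (l.1 i : ℂ) * (x i : ℂ)) = ((∑ i, (l.1 i : ℝ) * x i : ℝ) : ℂ) := by
    push_cast; ring
  rw [this]
  have : (2 * (Real.pi : ℂ) * Complex.I * ((∑ i, (l.1 i : ℝ) * x i : ℝ) : ℂ)).re = 0 := by
    simp [Complex.mul_re, Complex.mul_im]
  rw [this, Real.exp_zero]

lemma summable_coeff {d : ℕ} (θ : SymmL1 d) : Summable (fun l => ‖coeffL θ l‖) := by
  have := lp.memℓp (θ : lp (fun _ : Lam d => ℂ) 1)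
  rw [memℓp_gen_iff (by norm_num)] at this
  simpa [coeffL] using this

lemma summable_term {d : ℕ} (θ : SymmL1 d) (x : Fin d → ℝ) :
    Summable (fun l => coeffL θ l * phiF l x) := by
  apply Summable.of_norm
  have : (fun l => ‖coeffL θ l * phiF l x‖) = fun l => ‖coeffL θ l‖ := by
    funext l; rw [norm_mul, phiF_norm, mul_one]
  rw [this]
  exact summable_coeff θ

lemma coeffL_add_smul {d : ℕ} (θ η : SymmL1 d) (s : ℝ) (l : Lam d) :
    coeffL (θ + s • η) l = coeffL θ l + (s : ℂ) * coeffL η l := by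
  unfold coeffL
  have h1 : ((θ + s • η : SymmL1 d) : lp (fun _ : Lam d => ℂ) 1)
      = (θ : lp (fun _ : Lam d => ℂ) 1) + s • (η : lp (fun _ : Lam d => ℂ) 1) := rfl
  rw [h1, lp.coeFn_add]
  simp only [Pi.add_apply]
  have := lp.coeFn_smul (E := fun _ : Lam d => ℂ) (p := 1) s (η : lp (fun _ : Lam d => ℂ) 1)
  rw [congrFun this l]
  simp [Complex.real_smul]

lemma uFun_add_smul {d : ℕ} (θ η : SymmL1 d) (s : ℝ) (x : Fin d → ℝ) :
    uFun (θ + s • η) x = uFun θ x + s * uFun η x := by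
  unfold uFun
  have e : (fun l => coeffL (θ + s • η) l * phiF l x)
      = fun l => coeffL θ l * phiF l x + (s:ℂ) * (coeffL η l * phiF l x) := by
    funext l; rw [coeffL_add_smul]; ring
  rw [e, Summable.tsum_add (summable_term θ x) (((summable_term η x)).mul_left _), tsum_mul_left]
  simp [Complex.add_re, Complex.mul_re, Complex.ofReal_re, Complex.ofReal_im]

lemma abs_uFun_le {d : ℕ} (θ : SymmL1 d) (x : Fin d → ℝ) : |uFun θ x| ≤ ‖θ‖ := by
  unfold uFun
  calc |(∑' l : Lam d, coeffL θ l * phiF l x).re| ≤ ‖∑' l, coeffL θ l * phiF l x‖ :=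
        Complex.abs_re_le_norm _
    _ = ‖∑' l, coeffL θ l * phiF l x‖ := rfl
    _ ≤ ∑' l, ‖coeffL θ l * phiF l x‖ := norm_tsum_le_tsum_norm (by
        have : (fun l => ‖coeffL θ l * phiF l x‖) = fun l => ‖coeffL θ l‖ := by
          funext l; rw [norm_mul, phiF_norm, mul_one]
        rw [this]; exact summable_coeff θ)
    _ = ∑' l, ‖coeffL θ l‖ := by
        congr 1; funext l; rw [norm_mul, phiF_norm, mul_one]
    _ = ‖θ‖ := by
        have : ‖θ‖ = ‖(θ : lp (fun _ : Lam d => ℂ) 1)‖ := rfl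
        rw [this, lp.norm_eq_tsum_rpow (by norm_num) (θ : lp (fun _ : Lam d => ℂ) 1)]
        simp [coeffL]

lemma continuous_uFun {d : ℕ} (θ : SymmL1 d) : Continuous (uFun θ) := by
  unfold uFun
  apply Complex.continuous_re.comp
  apply continuous_tsum (u := fun l => ‖coeffL θ l‖)
  · intro l
    apply Continuous.mul continuous_const
    unfold phiF
    apply Complex.continuous_exp.comp
    apply Continuous.mul continuous_const
    exact continuous_finset_sum _ fun i _ =>
      Continuous.mul continuous_const (Complex.continuous_ofReal.comp (continuous_apply i))
  · exact summable_coeff θ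
  · intro l x; rw [norm_mul, phiF_norm, mul_one]

instance muU_prob (d : ℕ) : IsProbabilityMeasure (muU d) := by
  constructor
  rw [muU, Measure.restrict_apply_univ]
  have : cube d = Set.Icc (0 : Fin d → ℝ) 1 := rfl
  rw [this, Real.volume_Icc_pi]
  simp

/-! ### Bridging definitions -/

/-- exponent at the base point -/
def AYf {d : ℕ} (ε : ℝ) (c : (Fin d → ℝ) → (Fin d → ℝ) → ℝ) (θε : SymmL1 d)
    (y x : Fin d → ℝ) : ℝ := (uFun θε x - c x y) / ε

/-- normalized direction function -/
def wVf {d : ℕ} (ε : ℝ) (v : SymmL1 d) (x : Fin d → ℝ) : ℝ := uFun v x / ε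

lemma hEps_eq {d : ℕ} {ε : ℝ} (hε : ε ≠ 0) (c : (Fin d → ℝ) → (Fin d → ℝ) → ℝ)
    (θε v : SymmL1 d) (s : ℝ) (y : Fin d → ℝ) :
    hEps ε c (θε + s • v) y
      = ε * Real.log (gI (muU d) (AYf ε c θε y) (wVf ε v) 0 s) + ε := by
  have h : (fun x => Real.exp ((uFun (θε + s • v) x - c x y) / ε))
      = fun x => (wVf ε v x) ^ 0 * Real.exp (AYf ε c θε y x + s * wVf ε v x) := by
    funext x
    rw [pow_zero, one_mul, uFun_add_smul]
    congr 1
    unfold AYf wVf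
    field_simp
    ring
  unfold hEps gI
  rw [h]

lemma wVf_cont {d : ℕ} (ε : ℝ) (v : SymmL1 d) : Continuous (wVf ε v) :=
  (continuous_uFun v).div_const ε

lemma wVf_bound {d : ℕ} {ε : ℝ} (hε : 0 < ε) (v : SymmL1 d) (x : Fin d → ℝ) :
    |wVf ε v x| ≤ ‖v‖ / ε := by
  unfold wVf
  rw [abs_div, _root_.abs_of_pos hε]
  gcongr
  exact abs_uFun_le v x

lemma gI_y_meas {d : ℕ} {ε : ℝ} {c : (Fin d → ℝ) → (Fin d → ℝ) → ℝ}
    {ν : Measure (Fin d → ℝ)} [SFinite ν] (θε v : SymmL1 d)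
    (hc1 : AEStronglyMeasurable (fun p : (Fin d → ℝ) × (Fin d → ℝ) => c p.1 p.2)
      ((muU d).prod ν)) (k : ℕ) (s : ℝ) :
    AEStronglyMeasurable (fun y => gI (muU d) (AYf ε c θε y) (wVf ε v) k s) ν := by
  have hsw : AEStronglyMeasurable
      (fun z : (Fin d → ℝ) × (Fin d → ℝ) => c z.2 z.1) (ν.prod (muU d)) :=
    hc1.prod_swap
  have hint : AEStronglyMeasurable
      (fun z : (Fin d → ℝ) × (Fin d → ℝ) =>
        wVf ε v z.2 ^ k * Real.exp (AYf ε c θε z.1 z.2 + s * wVf ε v z.2))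
      (ν.prod (muU d)) := by
    apply AEStronglyMeasurable.mul
    · exact (((wVf_cont ε v).pow k).comp continuous_snd).aestronglyMeasurable
    · apply Real.continuous_exp.comp_aestronglyMeasurable
      apply AEStronglyMeasurable.add
      · unfold AYf
        have e : (fun z : (Fin d → ℝ) × (Fin d → ℝ) => (uFun θε z.2 - c z.2 z.1) / ε)
            = fun z => (uFun θε z.2 - c z.2 z.1) * ε⁻¹ := by
          funext z; rw [div_eq_mul_inv]
        rw [e]
        exact (((continuous_uFun θε).comp continuous_snd).aestronglyMeasurable.sub hsw).mul_const _
      · exact (continuous_const.mul ((wVf_cont ε v).comp continuous_snd)).aestronglyMeasurable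
  exact hint.integral_prod_right'
/-- self-concordance of `H_ε` along segments through the minimizer.
For every `θ`, the function `φ(t) = H_ε(θ^ε + t(θ − θ^ε))` is three times
differentiable on `(0,1)` and `|φ'''(t)| ≤ (2/ε) ‖θ − θ^ε‖_{ℓ1} φ''(t)` there. -/
theorem statement7
    (d : ℕ) (hd : 0 < d) (ε : ℝ) (hε : 0 < ε)
    (Y : Set (Fin d → ℝ)) (ν : Measure (Fin d → ℝ)) [IsProbabilityMeasure ν]
    (hνY : ν Yᶜ = 0)
    (c : (Fin d → ℝ) → (Fin d → ℝ) → ℝ)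
    (hc_lsc : LowerSemicontinuousOn (fun p : (Fin d → ℝ) × (Fin d → ℝ) => c p.1 p.2)
      (cube d ×ˢ Y))
    (hc_int : Integrable (fun p : (Fin d → ℝ) × (Fin d → ℝ) => c p.1 p.2) ((muU d).prod ν))
    (θε : SymmL1 d) (hmin : ∀ θ : SymmL1 d, HEps ε c ν θε ≤ HEps ε c ν θ) :
    ∀ θ : SymmL1 d,
      ∃ p1 p2 p3 : ℝ → ℝ,
        (∀ t ∈ Set.Ioo (0 : ℝ) 1,
          HasDerivAt (fun s : ℝ => HEps ε c ν (θε + s • (θ - θε))) (p1 t) t ∧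
          HasDerivAt p1 (p2 t) t ∧ HasDerivAt p2 (p3 t) t) ∧
        (∀ t ∈ Set.Ioo (0 : ℝ) 1, |p3 t| ≤ (2 / ε) * ‖θ - θε‖ * p2 t) := by
  intro θ
  classical
  set v : SymmL1 d := θ - θε with hv
  set β : ℝ := ‖v‖ / ε with hβd
  have hβ0 : 0 ≤ β := by positivity
  have hw : AEStronglyMeasurable (wVf ε v) (muU d) := (wVf_cont ε v).aestronglyMeasurable
  have hwb : ∀ᵐ x ∂(muU d), |wVf ε v x| ≤ β := ae_of_all _ (fun x => wVf_bound hε v x)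
  -- a.e. goodness of y
  have hY : ∀ᵐ y ∂ν, y ∈ Y := by
    rw [MeasureTheory.ae_iff]
    exact hνY
  have hsw : AEStronglyMeasurable (fun z : (Fin d → ℝ) × (Fin d → ℝ) => c z.2 z.1)
      (ν.prod (muU d)) := hc_int.aestronglyMeasurable.prod_swap
  have hslice : ∀ᵐ y ∂ν, AEStronglyMeasurable (fun x => c x y) (muU d) := hsw.prodMk_left
  have hgood : ∀ᵐ y ∂ν, AEStronglyMeasurable (AYf ε c θε y) (muU d)
      ∧ Integrable (fun x => Real.exp (AYf ε c θε y x)) (muU d) := by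
    filter_upwards [hY, hslice] with y hy hcy
    have hAY : AEStronglyMeasurable (AYf ε c θε y) (muU d) := by
      have e : AYf ε c θε y = fun x => (uFun θε x - c x y) * ε⁻¹ := by
        funext x; rw [AYf, div_eq_mul_inv]
      rw [e]
      exact (((continuous_uFun θε).aestronglyMeasurable.sub hcy).mul_const _)
    refine ⟨hAY, ?_⟩
    have hlsc : LowerSemicontinuousOn (fun x => c x y) (cube d) := by
      intro x hx b hb
      have h2 := hc_lsc (x, y) ⟨hx, hy⟩ b hb
      have ht : Filter.Tendsto (fun x => (x, y)) (𝓝[cube d] x) (𝓝[cube d ×ˢ Y] (x, y)) := by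
        apply tendsto_nhdsWithin_of_tendsto_nhds_of_eventually_within
        · exact ((continuous_id.prodMk continuous_const).tendsto x).mono_left nhdsWithin_le_nhds
        · exact eventually_mem_nhdsWithin.mono fun z hz => ⟨hz, hy⟩
      exact ht.eventually h2
    obtain ⟨M, hM⟩ := lsc_bddBelow (isCompact_Icc (a := (0 : Fin d → ℝ)) (b := 1)) hlsc
    refine Integrable.mono' (integrable_const (Real.exp ((‖θε‖ - M) / ε)))
      (Real.continuous_exp.comp_aestronglyMeasurable hAY) ?_
    have hae : ∀ᵐ x ∂(muU d), x ∈ cube d := ae_restrict_mem measurableSet_Icc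
    filter_upwards [hae] with x hx
    rw [Real.norm_eq_abs, Real.abs_exp]
    apply Real.exp_le_exp.2
    unfold AYf
    have hnum : uFun θε x - c x y ≤ ‖θε‖ - M :=
      sub_le_sub ((le_abs_self _).trans (abs_uFun_le θε x)) (hM x hx)
    exact div_le_div_of_nonneg_right hnum hε.le
  -- uniform Lipschitz bound in the segment parameter
  have hLip : ∀ᵐ y ∂ν, ∀ s t : ℝ,
      |hEps ε c (θε + s • v) y - hEps ε c (θε + t • v) y| ≤ ‖v‖ * |s - t| := by
    filter_upwards [hgood] with y hy s t
    have hderiv : ∀ u ∈ Set.univ,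
        HasDerivWithinAt (fun s => ε * Real.log (gI (muU d) (AYf ε c θε y) (wVf ε v) 0 s) + ε)
          (DD1 (muU d) (AYf ε c θε y) (wVf ε v) ε u) Set.univ u :=
      fun u _ => (hasDerivAt_psi hy.1 hy.2 hw hwb ε u).hasDerivWithinAt
    have hbd : ∀ u ∈ Set.univ,
        ‖DD1 (muU d) (AYf ε c θε y) (wVf ε v) ε u‖ ≤ ‖v‖ := by
      intro u _
      rw [Real.norm_eq_abs]
      calc |DD1 (muU d) (AYf ε c θε y) (wVf ε v) ε u| ≤ ε * β :=
            abs_DD1_le hy.1 hy.2 hw hwb ε hε.le u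
        _ = ‖v‖ := by rw [hβd]; field_simp
    have key := Convex.norm_image_sub_le_of_norm_hasDerivWithin_le hderiv hbd convex_univ
      (Set.mem_univ t) (Set.mem_univ s)
    rw [hEps_eq hε.ne' c θε v s y, hEps_eq hε.ne' c θε v t y]
    simpa [Real.norm_eq_abs] using key
  have hgk : ∀ (k : ℕ) (s : ℝ),
      AEMeasurable (fun y => gI (muU d) (AYf ε c θε y) (wVf ε v) k s) ν :=
    fun k s => (gI_y_meas θε v hc_int.aestronglyMeasurable k s).aemeasurable
  have hmeas_h : ∀ s : ℝ, AEStronglyMeasurable (fun y => hEps ε c (θε + s • v) y) ν := by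
    intro s
    have e : (fun y => hEps ε c (θε + s • v) y)
        = fun y => ε * Real.log (gI (muU d) (AYf ε c θε y) (wVf ε v) 0 s) + ε := by
      funext y; exact hEps_eq hε.ne' c θε v s y
    rw [e]
    exact ((aemeasurable_const.mul
      (Real.measurable_log.comp_aemeasurable (hgk 0 s))).add aemeasurable_const).aestronglyMeasurable
  have htrans : ∀ s t : ℝ, Integrable (fun y => hEps ε c (θε + s • v) y) ν →
      Integrable (fun y => hEps ε c (θε + t • v) y) ν := by
    intro s t hs
    have hdiff : Integrable
        (fun y => hEps ε c (θε + t • v) y - hEps ε c (θε + s • v) y) ν := by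
      refine Integrable.mono' (integrable_const (‖v‖ * |t - s|))
        ((hmeas_h t).sub (hmeas_h s)) ?_
      filter_upwards [hLip] with y hy
      rw [Real.norm_eq_abs]
      exact hy t s
    have e : (fun y => hEps ε c (θε + t • v) y)
        = fun y => hEps ε c (θε + s • v) y
            + (hEps ε c (θε + t • v) y - hEps ε c (θε + s • v) y) := by
      funext y; ring
    rw [e]
    exact hs.add hdiff
  by_cases hP : Integrable (fun y => hEps ε c (θε + (0:ℝ) • v) y) ν
  · -- main case: everything is integrable and we can differentiate under the integral
    have hmD1 : ∀ s : ℝ, AEStronglyMeasurable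
        (fun y => DD1 (muU d) (AYf ε c θε y) (wVf ε v) ε s) ν := by
      intro s
      exact (aemeasurable_const.mul ((hgk 1 s).div (hgk 0 s))).aestronglyMeasurable
    have hmD2 : ∀ s : ℝ, AEStronglyMeasurable
        (fun y => DD2 (muU d) (AYf ε c θε y) (wVf ε v) ε s) ν := by
      intro s
      have e : (fun y => DD2 (muU d) (AYf ε c θε y) (wVf ε v) ε s)
          = fun y => ε * (gI (muU d) (AYf ε c θε y) (wVf ε v) 2 s
                / gI (muU d) (AYf ε c θε y) (wVf ε v) 0 s
              - (gI (muU d) (AYf ε c θε y) (wVf ε v) 1 s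
                / gI (muU d) (AYf ε c θε y) (wVf ε v) 0 s)
              * (gI (muU d) (AYf ε c θε y) (wVf ε v) 1 s
                / gI (muU d) (AYf ε c θε y) (wVf ε v) 0 s)) := by
        funext y; unfold DD2; ring
      rw [e]
      exact (aemeasurable_const.mul (((hgk 2 s).div (hgk 0 s)).sub
        (((hgk 1 s).div (hgk 0 s)).mul ((hgk 1 s).div (hgk 0 s))))).aestronglyMeasurable
    have hmD3 : ∀ s : ℝ, AEStronglyMeasurable
        (fun y => DD3 (muU d) (AYf ε c θε y) (wVf ε v) ε s) ν := by
      intro s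
      have e : (fun y => DD3 (muU d) (AYf ε c θε y) (wVf ε v) ε s)
          = fun y => ε * (gI (muU d) (AYf ε c θε y) (wVf ε v) 3 s
                / gI (muU d) (AYf ε c θε y) (wVf ε v) 0 s
              - 3 * ((gI (muU d) (AYf ε c θε y) (wVf ε v) 1 s
                / gI (muU d) (AYf ε c θε y) (wVf ε v) 0 s)
                * (gI (muU d) (AYf ε c θε y) (wVf ε v) 2 s
                / gI (muU d) (AYf ε c θε y) (wVf ε v) 0 s))
              + 2 * ((gI (muU d) (AYf ε c θε y) (wVf ε v) 1 s
                / gI (muU d) (AYf ε c θε y) (wVf ε v) 0 s)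
                * ((gI (muU d) (AYf ε c θε y) (wVf ε v) 1 s
                / gI (muU d) (AYf ε c θε y) (wVf ε v) 0 s)
                * (gI (muU d) (AYf ε c θε y) (wVf ε v) 1 s
                / gI (muU d) (AYf ε c θε y) (wVf ε v) 0 s)))) := by
        funext y; unfold DD3; ring
      rw [e]
      refine (aemeasurable_const.mul (AEMeasurable.add (AEMeasurable.sub
        ((hgk 3 s).div (hgk 0 s))
        (aemeasurable_const.mul (((hgk 1 s).div (hgk 0 s)).mul ((hgk 2 s).div (hgk 0 s)))))
        (aemeasurable_const.mul (((hgk 1 s).div (hgk 0 s)).mul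
          (((hgk 1 s).div (hgk 0 s)).mul ((hgk 1 s).div (hgk 0 s))))))).aestronglyMeasurable
    have hiD1 : ∀ s : ℝ, Integrable
        (fun y => DD1 (muU d) (AYf ε c θε y) (wVf ε v) ε s) ν := by
      intro s
      refine Integrable.mono' (integrable_const (ε * β)) (hmD1 s) ?_
      filter_upwards [hgood] with y hy
      rw [Real.norm_eq_abs]
      exact abs_DD1_le hy.1 hy.2 hw hwb ε hε.le s
    have hiD2 : ∀ s : ℝ, Integrable
        (fun y => DD2 (muU d) (AYf ε c θε y) (wVf ε v) ε s) ν := by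
      intro s
      refine Integrable.mono' (integrable_const (2 * (ε * β ^ 2))) (hmD2 s) ?_
      filter_upwards [hgood] with y hy
      rw [Real.norm_eq_abs]
      exact abs_DD2_le hy.1 hy.2 hw hwb ε hε.le s
    have hiD3 : ∀ s : ℝ, Integrable
        (fun y => DD3 (muU d) (AYf ε c θε y) (wVf ε v) ε s) ν := by
      intro s
      refine Integrable.mono' (integrable_const (6 * (ε * β ^ 3))) (hmD3 s) ?_
      filter_upwards [hgood] with y hy
      rw [Real.norm_eq_abs]
      exact abs_DD3_le hy.1 hy.2 hw hwb ε hε.le s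
    refine ⟨fun s => ∫ y, DD1 (muU d) (AYf ε c θε y) (wVf ε v) ε s ∂ν,
            fun s => ∫ y, DD2 (muU d) (AYf ε c θε y) (wVf ε v) ε s ∂ν,
            fun s => ∫ y, DD3 (muU d) (AYf ε c θε y) (wVf ε v) ε s ∂ν, ?_, ?_⟩
    · intro t ht
      refine ⟨?_, ?_, ?_⟩
      · have key := hasDerivAt_integral_of_dominated_loc_of_deriv_le (μ := ν)
          (F := fun s y => hEps ε c (θε + s • v) y)
          (F' := fun s y => DD1 (muU d) (AYf ε c θε y) (wVf ε v) ε s) (x₀ := t)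
          (bound := fun _ => ε * β) (Metric.ball_mem_nhds _ one_pos)
          (Eventually.of_forall hmeas_h) (htrans 0 t hP) (hmD1 t) ?_ (integrable_const _) ?_
        · exact key.2
        · filter_upwards [hgood] with y hy s hs
          rw [Real.norm_eq_abs]
          exact abs_DD1_le hy.1 hy.2 hw hwb ε hε.le s
        · filter_upwards [hgood] with y hy s hs
          exact (hasDerivAt_psi hy.1 hy.2 hw hwb ε s).congr_of_eventuallyEq
            (Eventually.of_forall fun u => hEps_eq hε.ne' c θε v u y)
      · have key := hasDerivAt_integral_of_dominated_loc_of_deriv_le (μ := ν)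
          (F := fun s y => DD1 (muU d) (AYf ε c θε y) (wVf ε v) ε s)
          (F' := fun s y => DD2 (muU d) (AYf ε c θε y) (wVf ε v) ε s) (x₀ := t)
          (bound := fun _ => 2 * (ε * β ^ 2)) (Metric.ball_mem_nhds _ one_pos)
          (Eventually.of_forall hmD1) (hiD1 t) (hmD2 t) ?_ (integrable_const _) ?_
        · exact key.2
        · filter_upwards [hgood] with y hy s hs
          rw [Real.norm_eq_abs]
          exact abs_DD2_le hy.1 hy.2 hw hwb ε hε.le s
        · filter_upwards [hgood] with y hy s hs
          exact hasDerivAt_DD1 hy.1 hy.2 hw hwb ε s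
      · have key := hasDerivAt_integral_of_dominated_loc_of_deriv_le (μ := ν)
          (F := fun s y => DD2 (muU d) (AYf ε c θε y) (wVf ε v) ε s)
          (F' := fun s y => DD3 (muU d) (AYf ε c θε y) (wVf ε v) ε s) (x₀ := t)
          (bound := fun _ => 6 * (ε * β ^ 3)) (Metric.ball_mem_nhds _ one_pos)
          (Eventually.of_forall hmD2) (hiD2 t) (hmD3 t) ?_ (integrable_const _) ?_
        · exact key.2
        · filter_upwards [hgood] with y hy s hs
          rw [Real.norm_eq_abs]
          exact abs_DD3_le hy.1 hy.2 hw hwb ε hε.le s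
        · filter_upwards [hgood] with y hy s hs
          exact hasDerivAt_DD2 hy.1 hy.2 hw hwb ε s
    · intro t ht
      have hptw : ∀ᵐ y ∂ν, |DD3 (muU d) (AYf ε c θε y) (wVf ε v) ε t|
          ≤ 2 * β * DD2 (muU d) (AYf ε c θε y) (wVf ε v) ε t := by
        filter_upwards [hgood] with y hy
        exact abs_DD3_le_mul hy.1 hy.2 hw hwb hε.le t
      have habs : |∫ y, DD3 (muU d) (AYf ε c θε y) (wVf ε v) ε t ∂ν|
          ≤ ∫ y, |DD3 (muU d) (AYf ε c θε y) (wVf ε v) ε t| ∂ν := by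
        simpa [Real.norm_eq_abs] using norm_integral_le_integral_norm (μ := ν)
          (f := fun y => DD3 (muU d) (AYf ε c θε y) (wVf ε v) ε t)
      calc |∫ y, DD3 (muU d) (AYf ε c θε y) (wVf ε v) ε t ∂ν|
          ≤ ∫ y, |DD3 (muU d) (AYf ε c θε y) (wVf ε v) ε t| ∂ν := habs
        _ ≤ ∫ y, 2 * β * DD2 (muU d) (AYf ε c θε y) (wVf ε v) ε t ∂ν :=
            integral_mono_ae (hiD3 t).abs ((hiD2 t).const_mul _) hptw
        _ = 2 * β * ∫ y, DD2 (muU d) (AYf ε c θε y) (wVf ε v) ε t ∂ν :=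
            integral_const_mul _ _
        _ = 2 / ε * ‖v‖ * ∫ y, DD2 (muU d) (AYf ε c θε y) (wVf ε v) ε t ∂ν := by
            rw [hβd]; ring
  · -- degenerate case: the integrand is never `ν`-integrable and `HEps` vanishes identically
    have hzero : ∀ s : ℝ, HEps ε c ν (θε + s • v) = 0 := by
      intro s
      exact integral_undef (fun hcon => hP (htrans s 0 hcon))
    have e : (fun s : ℝ => HEps ε c ν (θε + s • v)) = fun _ => (0:ℝ) := funext hzero
    refine ⟨fun _ => 0, fun _ => 0, fun _ => 0, ?_, ?_⟩
    · intro t ht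
      refine ⟨?_, hasDerivAt_const t 0, hasDerivAt_const t 0⟩
      rw [e]
      exact hasDerivAt_const t 0
    · intro t ht
      simp


end
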